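/- For the standard normal distribution, the integral J = ∫∫∫_{y < x < z} (x−y)(z−x) φ(z) φ(y) φ(x) dz dy dx equals √3/(2π) − 1/6. -/

import Mathlib

open MeasureTheory Real Filter Set

noncomputable def phi (x : ℝ) : ℝ := (1 / Real.sqrt (2 * Real.pi)) * Real.exp (-x ^ 2 / 2)

lemma phi_eq (x : ℝ) : phi x = (1 / Real.sqrt (2 * Real.pi)) * Real.exp (-(1/2) * x ^ 2) := by
  rw [phi]; ring_nf

lemma phi_nonneg (x : ℝ) : 0 ≤ phi x := by
  apply mul_nonneg (by positivity) (Real.exp_pos _).le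

lemma phi_le_one (x : ℝ) : phi x ≤ 1 := by
  have h1 : Real.exp (-x ^ 2 / 2) ≤ 1 := by
    rw [Real.exp_le_one_iff]; nlinarith [sq_nonneg x]
  have h2 : (1 : ℝ) / Real.sqrt (2 * Real.pi) ≤ 1 := by
    rw [div_le_one (by positivity)]
    nlinarith [Real.sq_sqrt (by positivity : (0:ℝ) ≤ 2*Real.pi),
      Real.sqrt_nonneg (2*Real.pi), Real.pi_gt_three]
  calc phi x ≤ 1 * 1 := by
        apply mul_le_mul h2 h1 (Real.exp_pos _).le (by norm_num)
    _ = 1 := by norm_num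

lemma continuous_phi : Continuous phi := by
  unfold phi; continuity

lemma hasDerivAt_phi (x : ℝ) : HasDerivAt phi (-x * phi x) x := by
  have h : HasDerivAt (fun x : ℝ => -x ^ 2 / 2) (-x) x := by
    have := ((hasDerivAt_pow 2 x).neg).div_const 2
    simpa using this.congr_deriv (by ring)
  exact (h.exp.const_mul (1 / Real.sqrt (2 * Real.pi))).congr_deriv (by rw [phi]; ring)

lemma phi_fun_eq : phi = fun x => (1 / Real.sqrt (2 * Real.pi)) * Real.exp (-(1/2) * x ^ 2) :=
  funext phi_eq

lemma integrable_phi : Integrable phi := by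
  rw [phi_fun_eq]
  exact (integrable_exp_neg_mul_sq (by norm_num : (0:ℝ) < 1/2)).const_mul _

lemma integral_phi : ∫ x : ℝ, phi x = 1 := by
  rw [phi_fun_eq, integral_const_mul, integral_gaussian (1/2 : ℝ),
    show (Real.pi / (1/2)) = 2 * Real.pi by ring, one_div, inv_mul_cancel₀]
  positivity

noncomputable def Phi (x : ℝ) : ℝ := ∫ t in Set.Iio x, phi t

lemma Phi_eq_Iic (x : ℝ) : Phi x = ∫ t in Set.Iic x, phi t :=
  setIntegral_congr_set (Iio_ae_eq_Iic)

lemma Phi_nonneg (x : ℝ) : 0 ≤ Phi x :=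
  setIntegral_nonneg measurableSet_Iio fun t _ => phi_nonneg t

lemma Phi_le_one (x : ℝ) : Phi x ≤ 1 := by
  rw [Phi_eq_Iic, ← integral_phi]
  exact setIntegral_le_integral integrable_phi (Filter.Eventually.of_forall phi_nonneg)

lemma Phi_fun_eq : Phi = fun x => (∫ t in Set.Iic 0, phi t) + ∫ t in (0:ℝ)..x, phi t := by
  funext x
  rw [Phi_eq_Iic, ← intervalIntegral.integral_Iic_sub_Iic integrable_phi.integrableOn
    integrable_phi.integrableOn]
  ring

lemma hasDerivAt_Phi (x : ℝ) : HasDerivAt Phi (phi x) x := by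
  rw [Phi_fun_eq]
  have h := intervalIntegral.integral_hasDerivAt_right
    (integrable_phi.intervalIntegrable (a := 0) (b := x))
    (continuous_phi.aestronglyMeasurable.stronglyMeasurableAtFilter)
    continuous_phi.continuousAt
  exact (h.const_add _)

lemma continuous_Phi : Continuous Phi :=
  continuous_iff_continuousAt.mpr fun x => (hasDerivAt_Phi x).continuousAt

lemma Phi_tendsto_atTop : Filter.Tendsto Phi Filter.atTop (nhds 1) := by
  have h := tendsto_limUnder_of_hasDerivAt_of_integrableOn_Ioi (a := 0)
    (fun x _ => hasDerivAt_Phi x) integrable_phi.integrableOn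
  have h2 := integral_Ioi_of_hasDerivAt_of_tendsto' (a := 0) (fun x _ => hasDerivAt_Phi x)
    integrable_phi.integrableOn h
  have h3 : Phi 0 + ∫ t in Set.Ioi (0:ℝ), phi t = 1 := by
    rw [Phi_eq_Iic, intervalIntegral.integral_Iic_add_Ioi integrable_phi.integrableOn
      integrable_phi.integrableOn, integral_phi]
  have : limUnder Filter.atTop Phi = 1 := by linarith
  rwa [this] at h

lemma Phi_tendsto_atBot : Filter.Tendsto Phi Filter.atBot (nhds 0) := by
  have h := tendsto_limUnder_of_hasDerivAt_of_integrableOn_Iic (a := 0)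
    (fun x _ => hasDerivAt_Phi x) integrable_phi.integrableOn
  have h2 := integral_Iic_of_hasDerivAt_of_tendsto' (a := 0) (fun x _ => hasDerivAt_Phi x)
    integrable_phi.integrableOn h
  rw [← Phi_eq_Iic] at h2
  have : limUnder Filter.atBot Phi = 0 := by linarith
  rwa [this] at h

lemma coeff_le_one : (1:ℝ) / Real.sqrt (2 * Real.pi) ≤ 1 := by
  rw [div_le_one (by positivity)]
  nlinarith [Real.sq_sqrt (by positivity : (0:ℝ) ≤ 2*Real.pi),
    Real.sqrt_nonneg (2*Real.pi), Real.pi_gt_three]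

lemma phi_le_exp_half (x : ℝ) : phi x ≤ Real.exp (-x^2/2) := by
  rw [phi]
  nlinarith [Real.exp_pos (-x^2/2), coeff_le_one,
    (by positivity : (0:ℝ) < 1 / Real.sqrt (2*Real.pi))]

lemma abs_le_exp_quarter (x : ℝ) : |x| ≤ Real.exp (x^2/4) := by
  have h := Real.add_one_le_exp (x^2/4)
  nlinarith [sq_abs x, sq_nonneg (|x| - 2)]

lemma sq_le_exp_quarter (x : ℝ) : x^2 ≤ 4 * Real.exp (x^2/4) := by
  have h := Real.add_one_le_exp (x^2/4)
  nlinarith [Real.exp_pos (x^2/4)]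

lemma bound1 (x : ℝ) : phi x ≤ Real.exp (-(1/4)*x^2) := by
  refine (phi_le_exp_half x).trans (Real.exp_le_exp.mpr ?_)
  nlinarith [sq_nonneg x]

lemma bound2 (x : ℝ) : |x| * phi x ≤ Real.exp (-(1/4)*x^2) := by
  calc |x| * phi x ≤ Real.exp (x^2/4) * Real.exp (-x^2/2) :=
        mul_le_mul (abs_le_exp_quarter x) (phi_le_exp_half x) (phi_nonneg x) (Real.exp_pos _).le
    _ = Real.exp (-(1/4)*x^2) := by rw [← Real.exp_add]; ring_nf

lemma bound3 (x : ℝ) : x^2 * phi x ≤ 4 * Real.exp (-(1/4)*x^2) := by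
  calc x^2 * phi x ≤ (4 * Real.exp (x^2/4)) * Real.exp (-x^2/2) :=
        mul_le_mul (sq_le_exp_quarter x) (phi_le_exp_half x) (phi_nonneg x)
          (by positivity)
    _ = 4 * Real.exp (-(1/4)*x^2) := by rw [mul_assoc, ← Real.exp_add]; ring_nf

lemma tendsto_exp_quarter_atTop :
    Filter.Tendsto (fun x : ℝ => Real.exp (-(1/4)*x^2)) Filter.atTop (nhds 0) := by
  have h : Filter.Tendsto (fun x : ℝ => x^2) Filter.atTop Filter.atTop :=
    tendsto_pow_atTop two_ne_zero
  have h2 : Filter.Tendsto (fun x : ℝ => -(1/4)*x^2) Filter.atTop Filter.atBot :=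
    h.const_mul_atTop_of_neg (by norm_num)
  simpa [Function.comp_def] using Real.tendsto_exp_atBot.comp h2

lemma tendsto_exp_quarter_atBot :
    Filter.Tendsto (fun x : ℝ => Real.exp (-(1/4)*x^2)) Filter.atBot (nhds 0) := by
  have h : Filter.Tendsto (fun x : ℝ => x^2) Filter.atBot Filter.atTop := by
    have h1 : Filter.Tendsto (fun x : ℝ => -x) Filter.atBot Filter.atTop :=
      tendsto_neg_atBot_atTop
    have := (tendsto_pow_atTop (n := 2) two_ne_zero).comp h1
    simpa [Function.comp_def] using this
  have h2 : Filter.Tendsto (fun x : ℝ => -(1/4)*x^2) Filter.atBot Filter.atBot :=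
    h.const_mul_atTop_of_neg (by norm_num)
  simpa [Function.comp_def] using Real.tendsto_exp_atBot.comp h2

lemma tendsto_phi_atTop : Filter.Tendsto phi Filter.atTop (nhds 0) :=
  squeeze_zero_norm (fun x => by
    rw [Real.norm_eq_abs, abs_of_nonneg (phi_nonneg x)]; exact bound1 x)
    tendsto_exp_quarter_atTop

lemma tendsto_phi_atBot : Filter.Tendsto phi Filter.atBot (nhds 0) :=
  squeeze_zero_norm (fun x => by
    rw [Real.norm_eq_abs, abs_of_nonneg (phi_nonneg x)]; exact bound1 x)
    tendsto_exp_quarter_atBot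

lemma tendsto_xphi_atTop :
    Filter.Tendsto (fun x => x * phi x) Filter.atTop (nhds 0) :=
  squeeze_zero_norm (fun x => by
    rw [Real.norm_eq_abs, abs_mul, abs_of_nonneg (phi_nonneg x)]; exact bound2 x)
    tendsto_exp_quarter_atTop

lemma tendsto_xphi_atBot :
    Filter.Tendsto (fun x => x * phi x) Filter.atBot (nhds 0) :=
  squeeze_zero_norm (fun x => by
    rw [Real.norm_eq_abs, abs_mul, abs_of_nonneg (phi_nonneg x)]; exact bound2 x)
    tendsto_exp_quarter_atBot

lemma integrable_id_mul_phi : Integrable (fun x => x * phi x) := by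
  refine Integrable.mono' (integrable_exp_neg_mul_sq (by norm_num : (0:ℝ) < 1/4))
    ((continuous_id.mul continuous_phi).aestronglyMeasurable)
    (Filter.Eventually.of_forall fun x => ?_)
  rw [Real.norm_eq_abs, abs_mul, abs_of_nonneg (phi_nonneg x)]
  exact bound2 x

lemma integrable_sq_mul_phi : Integrable (fun x => x^2 * phi x) := by
  refine Integrable.mono' ((integrable_exp_neg_mul_sq
      (by norm_num : (0:ℝ) < 1/4)).const_mul 4)
    (((continuous_pow 2).mul continuous_phi).aestronglyMeasurable)
    (Filter.Eventually.of_forall fun x => ?_)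
  rw [Real.norm_eq_abs, abs_mul, abs_of_nonneg (phi_nonneg x), abs_of_nonneg (sq_nonneg x)]
  exact bound3 x

lemma integral_Ioi_z (x : ℝ) :
    ∫ z in Set.Ioi x, (z - x) * phi z = phi x - x * (1 - Phi x) := by
  have hK : ∀ z ∈ Set.Ici x, HasDerivAt (fun z => -phi z - x * Phi z) ((z - x) * phi z) z := by
    intro z _
    exact ((hasDerivAt_phi z).neg.sub ((hasDerivAt_Phi z).const_mul x)).congr_deriv (by ring)
  have hfun : (fun z : ℝ => (z - x) * phi z) = fun z => z * phi z - x * phi z := by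
    funext z; ring
  have hint : IntegrableOn (fun z : ℝ => (z - x) * phi z) (Set.Ioi x) := by
    rw [hfun]
    exact (integrable_id_mul_phi.sub (integrable_phi.const_mul x)).integrableOn
  have hlim : Filter.Tendsto (fun z => -phi z - x * Phi z) Filter.atTop (nhds (-0 - x * 1)) :=
    (tendsto_phi_atTop.neg).sub (Phi_tendsto_atTop.const_mul x)
  have := integral_Ioi_of_hasDerivAt_of_tendsto' hK hint hlim
  rw [this]; ring

lemma integral_Iio_y (x : ℝ) :
    ∫ y in Set.Iio x, (x - y) * phi y = x * Phi x + phi x := by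
  rw [setIntegral_congr_set (Iio_ae_eq_Iic)]
  have hL : ∀ y ∈ Set.Iic x, HasDerivAt (fun y => x * Phi y + phi y) ((x - y) * phi y) y := by
    intro y _
    exact (((hasDerivAt_Phi y).const_mul x).add (hasDerivAt_phi y)).congr_deriv (by ring)
  have hfun : (fun y : ℝ => (x - y) * phi y) = fun y => x * phi y - y * phi y := by
    funext y; ring
  have hint : IntegrableOn (fun y : ℝ => (x - y) * phi y) (Set.Iic x) := by
    rw [hfun]
    exact ((integrable_phi.const_mul x).sub integrable_id_mul_phi).integrableOn
  have hlim : Filter.Tendsto (fun y => x * Phi y + phi y) Filter.atBot (nhds (x * 0 + 0)) :=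
    (Phi_tendsto_atBot.const_mul x).add tendsto_phi_atBot
  have := integral_Iic_of_hasDerivAt_of_tendsto' hL hint hlim
  rw [this]; ring

noncomputable def G (x : ℝ) : ℝ :=
  -2 * ((phi x)^2 * Phi x) + x * phi x * Phi x - (Phi x)^2/2 - x * phi x * (Phi x)^2
    + (Phi x)^3/3 + (phi x)^2

noncomputable def W (x : ℝ) : ℝ :=
  2*x*(phi x)^2*Phi x - 2*(phi x)^3 - x^2*phi x*Phi x - x*(phi x)^2 + x^2*phi x*(Phi x)^2

lemma hasDerivAt_G (x : ℝ) : HasDerivAt G (W x) x := by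
  have hp := hasDerivAt_phi x
  have hP := hasDerivAt_Phi x
  have hx := hasDerivAt_id x
  have t1 := (((hp.pow 2).mul hP).const_mul (-2 : ℝ))
  have t2 := ((hx.mul hp).mul hP)
  have t3 := ((hP.pow 2).div_const 2)
  have t4 := ((hx.mul hp).mul (hP.pow 2))
  have t5 := ((hP.pow 3).div_const 3)
  have t6 := hp.pow 2
  have H := ((((t1.add t2).sub t3).sub t4).add t5).add t6
  have H2 : HasDerivAt G _ x := H
  exact H2.congr_deriv (by unfold W; simp only [id_eq, Pi.pow_apply, Pi.mul_apply]; push_cast; ring)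

lemma W_bound (x : ℝ) : |W x| ≤ 13 * Real.exp (-(1/4)*x^2) := by
  have hp0 := phi_nonneg x
  have hp1 := phi_le_one x
  have hP0 := Phi_nonneg x
  have hP1 := Phi_le_one x
  have hb1 := bound1 x
  have hb2 := bound2 x
  have hb3 := bound3 x
  have hx1 : x ≤ |x| := le_abs_self x
  have hx2 : -|x| ≤ x := neg_abs_le x
  have hx0 : (0:ℝ) ≤ |x| := abs_nonneg x
  have hE0 : (0:ℝ) ≤ Real.exp (-(1/4)*x^2) := (Real.exp_pos _).le
  have hq0 : (0:ℝ) ≤ (phi x)^2*Phi x := by positivity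
  have hr0 : (0:ℝ) ≤ (phi x)^2 := by positivity
  have hpP : (phi x)^2*Phi x ≤ phi x := by nlinarith
  have hp2 : (phi x)^2 ≤ phi x := by nlinarith
  have hP2le : (Phi x)^2 ≤ 1 := pow_le_one₀ hP0 hP1
  have hpP2 : phi x*(Phi x)^2 ≤ phi x := by nlinarith [mul_le_mul_of_nonneg_left hP2le hp0]
  have hA1 : x*((phi x)^2*Phi x) ≤ Real.exp (-(1/4)*x^2) := by
    linarith [mul_le_mul_of_nonneg_left hpP hx0, mul_le_mul_of_nonneg_right hx1 hq0, hb2]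
  have hA2 : -Real.exp (-(1/4)*x^2) ≤ x*((phi x)^2*Phi x) := by
    linarith [mul_le_mul_of_nonneg_left hpP hx0, mul_le_mul_of_nonneg_right hx2 hq0, hb2]
  have hD1 : x*(phi x)^2 ≤ Real.exp (-(1/4)*x^2) := by
    linarith [mul_le_mul_of_nonneg_left hp2 hx0, mul_le_mul_of_nonneg_right hx1 hr0, hb2]
  have hD2 : -Real.exp (-(1/4)*x^2) ≤ x*(phi x)^2 := by
    linarith [mul_le_mul_of_nonneg_left hp2 hx0, mul_le_mul_of_nonneg_right hx2 hr0, hb2]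
  have hB1 : (phi x)^3 ≤ Real.exp (-(1/4)*x^2) := by nlinarith [sq_nonneg (phi x), mul_le_one₀ hp1 hp0 hp1]
  have hB0 : (0:ℝ) ≤ (phi x)^3 := by positivity
  have hC1 : x^2*(phi x*Phi x) ≤ 4*Real.exp (-(1/4)*x^2) := by
    linarith [mul_le_mul_of_nonneg_left (mul_le_of_le_one_right hp0 hP1) (sq_nonneg x), hb3]
  have hC0 : (0:ℝ) ≤ x^2*(phi x*Phi x) := by positivity
  have hF1 : x^2*(phi x*(Phi x)^2) ≤ 4*Real.exp (-(1/4)*x^2) := by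
    linarith [mul_le_mul_of_nonneg_left hpP2 (sq_nonneg x), hb3]
  have hF0 : (0:ℝ) ≤ x^2*(phi x*(Phi x)^2) := by positivity
  rw [abs_le]; unfold W
  constructor <;> linarith

lemma continuous_W : Continuous W := by
  unfold W
  exact (((((continuous_const.mul continuous_id).mul (continuous_phi.pow 2)).mul
    continuous_Phi).sub (continuous_const.mul (continuous_phi.pow 3))).sub
    (((continuous_pow 2).mul continuous_phi).mul continuous_Phi)).sub
    (continuous_id.mul (continuous_phi.pow 2)) |>.add
    (((continuous_pow 2).mul continuous_phi).mul (continuous_Phi.pow 2))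

lemma integrable_W : Integrable W := by
  refine Integrable.mono' ((integrable_exp_neg_mul_sq
      (by norm_num : (0:ℝ) < 1/4)).const_mul 13)
    continuous_W.aestronglyMeasurable
    (Filter.Eventually.of_forall fun x => ?_)
  rw [Real.norm_eq_abs]
  exact W_bound x

lemma G_tendsto_atTop : Filter.Tendsto G Filter.atTop (nhds (-1/6)) := by
  have h1 := ((tendsto_phi_atTop.pow 2).mul Phi_tendsto_atTop).const_mul (-2 : ℝ)
  have h2 := tendsto_xphi_atTop.mul Phi_tendsto_atTop
  have h3 := (Phi_tendsto_atTop.pow 2).div_const 2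
  have h4 := tendsto_xphi_atTop.mul (Phi_tendsto_atTop.pow 2)
  have h5 := (Phi_tendsto_atTop.pow 3).div_const 3
  have h6 := tendsto_phi_atTop.pow 2
  have H := ((((h1.add h2).sub h3).sub h4).add h5).add h6
  have : Filter.Tendsto G Filter.atTop
      (nhds (-2*((0:ℝ)^2*1) + 0*1 - 1^2/2 - 0*1^2 + 1^3/3 + 0^2)) := H
  convert this using 2
  norm_num

lemma G_tendsto_atBot : Filter.Tendsto G Filter.atBot (nhds 0) := by
  have h1 := ((tendsto_phi_atBot.pow 2).mul Phi_tendsto_atBot).const_mul (-2 : ℝ)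
  have h2 := tendsto_xphi_atBot.mul Phi_tendsto_atBot
  have h3 := (Phi_tendsto_atBot.pow 2).div_const 2
  have h4 := tendsto_xphi_atBot.mul (Phi_tendsto_atBot.pow 2)
  have h5 := (Phi_tendsto_atBot.pow 3).div_const 3
  have h6 := tendsto_phi_atBot.pow 2
  have H := ((((h1.add h2).sub h3).sub h4).add h5).add h6
  have : Filter.Tendsto G Filter.atBot
      (nhds (-2*((0:ℝ)^2*0) + 0*0 - 0^2/2 - 0*0^2 + 0^3/3 + 0^2)) := H
  convert this using 2
  norm_num

lemma integral_W : ∫ x : ℝ, W x = -1/6 := by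
  have := integral_of_hasDerivAt_of_tendsto hasDerivAt_G integrable_W
    G_tendsto_atBot G_tendsto_atTop
  rw [this]; ring

lemma phi_cubed_eq : (fun x : ℝ => (phi x)^3)
    = fun x => (1 / Real.sqrt (2 * Real.pi))^3 * Real.exp (-(3/2) * x^2) := by
  funext x
  rw [phi, mul_pow, ← Real.exp_nat_mul]
  congr 1
  push_cast; ring

lemma integrable_phi_cubed : Integrable (fun x : ℝ => (phi x)^3) := by
  rw [phi_cubed_eq]
  exact (integrable_exp_neg_mul_sq (by norm_num : (0:ℝ) < 3/2)).const_mul _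

lemma integral_phi_cubed : ∫ x : ℝ, (phi x)^3 = Real.sqrt 3 / (6 * Real.pi) := by
  rw [phi_cubed_eq, integral_const_mul, integral_gaussian (3/2 : ℝ)]
  have hπ : (0:ℝ) < Real.pi := Real.pi_pos
  have h1 : Real.pi / (3/2 : ℝ) = (2 * Real.pi) / 3 := by ring
  have hs : Real.sqrt (2*Real.pi) ^ 2 = 2*Real.pi := Real.sq_sqrt (by positivity)
  have hs0 : 0 < Real.sqrt (2*Real.pi) := Real.sqrt_pos.mpr (by positivity)
  have ht : Real.sqrt 3 ^ 2 = 3 := Real.sq_sqrt (by norm_num)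
  have ht0 : 0 < Real.sqrt 3 := Real.sqrt_pos.mpr (by norm_num)
  rw [h1, Real.sqrt_div (by positivity : (0:ℝ) ≤ 2*Real.pi) 3]
  have h2 : Real.sqrt 2 ^ 2 = 2 := Real.sq_sqrt (by norm_num)
  have hp2 : Real.sqrt Real.pi ^ 2 = Real.pi := Real.sq_sqrt Real.pi_pos.le
  field_simp
  linear_combination (-(Real.sqrt 3 ^ 2)) * hs - (2 * Real.pi) * ht

lemma inner_z (x y : ℝ) :
    (∫ z in Set.Ioi x, (x - y) * (z - x) * phi z * phi y * phi x)
      = ((x - y) * phi y * phi x) * (phi x - x * (1 - Phi x)) := by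
  have h : (fun z => (x - y) * (z - x) * phi z * phi y * phi x)
      = fun z => ((x - y) * phi y * phi x) * ((z - x) * phi z) := by
    funext z; ring
  rw [h, integral_const_mul, integral_Ioi_z x]

lemma inner_y (x : ℝ) :
    (∫ y in Set.Iio x, ∫ z in Set.Ioi x, (x - y) * (z - x) * phi z * phi y * phi x)
      = W x + 3 * (phi x)^3 := by
  have h1 : (∫ y in Set.Iio x, ∫ z in Set.Ioi x, (x - y) * (z - x) * phi z * phi y * phi x)
      = ∫ y in Set.Iio x, (phi x * (phi x - x * (1 - Phi x))) * ((x - y) * phi y) := by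
    apply integral_congr_ae
    filter_upwards with y
    rw [inner_z x y]; ring
  rw [h1, integral_const_mul, integral_Iio_y x]
  unfold W; ring

theorem stmt13 :
    (∫ x : ℝ, ∫ y in Set.Iio x, ∫ z in Set.Ioi x,
        (x - y) * (z - x) * phi z * phi y * phi x) =
      Real.sqrt 3 / (2 * Real.pi) - 1 / 6 := by
  have h1 : (∫ x : ℝ, ∫ y in Set.Iio x, ∫ z in Set.Ioi x,
        (x - y) * (z - x) * phi z * phi y * phi x)
      = ∫ x : ℝ, (W x + 3 * (phi x)^3) := by
    apply integral_congr_ae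
    filter_upwards with x
    exact inner_y x
  rw [h1, integral_add integrable_W (integrable_phi_cubed.const_mul 3),
    integral_const_mul, integral_W, integral_phi_cubed]
  have hπ : (0:ℝ) < Real.pi := Real.pi_pos
  field_simp
  ring
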